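/- arXiv:2601.00265 — 3 statements merged into one kernel-verified Lean document; each statement's English description precedes it below -/
import Mathlib

section
/- Let h : [−π, π] → ℝ be an even integrable function with ∫_{−π}^{π} |h(λ)|/(1 − cos λ) dλ < ∞, and define the outer function Q(z) = exp((1/2π)∫_{−π}^{π} ((e^{iλ} + z)/(e^{iλ} − z))·h(λ) dλ) for |z| < 1. Then Q is analytic on the open unit disk, lim_{r→1⁻} Q(r) = 1, and the group delay GD(Q) := lim_{r→1⁻} (Q(r) − 1)/(r − 1) exists and equals −(1/2π)∫_{−π}^{π} h(λ)/(1 − cos λ) dλ. Consequently, setting σ_S²(Q) = exp((1/π)∫_{−π}^{π} h(λ) dλ) (Kolmogorov's one-step mean squared forecast error for the outer function with boundary modulus e^{h}) and c = (1/2π)∫_{−π}^{π} (cos λ/(1 − cos λ))·h(λ) dλ, one has the exact exponential relation σ_S²(Q) = exp(−2·GD(Q) − 2c); in particular the supplier's forecast error is controlled exponentially by the group delay of the outer factor. -/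
open MeasureTheory intervalIntegral

open Filter Set Metric Topology in
set_option maxHeartbeats 2000000 in
/-- Let `h : [−π, π] → ℝ` be even and integrable with `∫ |h|/(1 − cos λ) dλ < ∞`, and
let `Q(z) = exp((1/2π)∫ ((e^{iλ}+z)/(e^{iλ}−z))·h(λ) dλ)` be the associated outer
function. Then `Q` is analytic on the open unit disk, `Q(r) → 1` as `r → 1⁻`, the
group delay `GD(Q) = lim_{r→1⁻} (Q(r) − 1)/(r − 1)` exists and equals
`−(1/2π)∫ h/(1 − cos λ) dλ`, and with `σ_S²(Q) = exp((1/π)∫ h)` and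
`c = (1/2π)∫ (cos λ/(1 − cos λ)) h(λ) dλ` one has `σ_S²(Q) = exp(−2·GD(Q) − 2c)`. -/
theorem stmt_3 (h : ℝ → ℝ) (heven : ∀ l : ℝ, h (-l) = h l)
    (hint : IntervalIntegrable h volume (-Real.pi) Real.pi)
    (hint2 : IntervalIntegrable (fun l => |h l| / (1 - Real.cos l)) volume
      (-Real.pi) Real.pi)
    (Q : ℂ → ℂ)
    (hQ : Q = fun z => Complex.exp ((1 / (2 * Real.pi) : ℂ) *
      ∫ l in (-Real.pi)..Real.pi,
        ((Complex.exp (Complex.I * l) + z) / (Complex.exp (Complex.I * l) - z)) *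
          (h l : ℂ)))
    (GD c : ℝ)
    (hGD : GD = -(1 / (2 * Real.pi)) *
      ∫ l in (-Real.pi)..Real.pi, h l / (1 - Real.cos l))
    (hc : c = (1 / (2 * Real.pi)) *
      ∫ l in (-Real.pi)..Real.pi, (Real.cos l / (1 - Real.cos l)) * h l) :
    AnalyticOnNhd ℂ Q (Metric.ball 0 1) ∧
    Filter.Tendsto (fun r : ℝ => Q (r : ℂ)) (nhdsWithin 1 (Set.Iio 1)) (nhds 1) ∧
    Filter.Tendsto (fun r : ℝ => (Q (r : ℂ) - 1) / ((r : ℂ) - 1))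
      (nhdsWithin 1 (Set.Iio 1)) (nhds (GD : ℂ)) ∧
    Real.exp ((1 / Real.pi) * ∫ l in (-Real.pi)..Real.pi, h l) =
      Real.exp (-2 * GD - 2 * c) := by
  have hπ : (0:ℝ) < Real.pi := Real.pi_pos
  set P := Real.pi with hP
  -- basic facts about the Poisson-type kernel
  set aK : ℝ → ℂ := fun l => Complex.exp (Complex.I * l) with haK
  have haK1 : ∀ l, ‖aK l‖ = 1 := by
    intro l; rw [haK]; simp only; rw [mul_comm]; exact Complex.norm_exp_ofReal_mul_I l
  have haKc : Continuous aK := by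
    rw [haK]; exact Complex.continuous_exp.comp (continuous_const.mul Complex.continuous_ofReal)
  have haKne : ∀ (z : ℂ), ‖z‖ < 1 → ∀ l, aK l - z ≠ 0 := by
    intro z hz l hzero
    rw [sub_eq_zero] at hzero
    rw [← haK1 l, hzero] at hz
    exact lt_irrefl _ hz
  have haKlb : ∀ (z : ℂ), ‖z‖ < 1 → ∀ l, 1 - ‖z‖ ≤ ‖aK l - z‖ := by
    intro z hz l
    calc 1 - ‖z‖ = ‖aK l‖ - ‖z‖ := by rw [haK1]
    _ ≤ ‖aK l - z‖ := norm_sub_norm_le _ _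
  have huIoc : Set.uIoc (-P) P = Set.Ioc (-P) P := Set.uIoc_of_le (by linarith)
  have hmeas : AEStronglyMeasurable h (volume.restrict (Set.uIoc (-P) P)) := by
    rw [huIoc]; exact hint.aestronglyMeasurable
  have hmeasC : AEStronglyMeasurable (fun l => (h l : ℂ)) (volume.restrict (Set.uIoc (-P) P)) :=
    Complex.continuous_ofReal.comp_aestronglyMeasurable hmeas
  -- integrability of (bounded continuous) ∙ h
  have hintmul : ∀ (φ : ℝ → ℂ) (C : ℝ), Continuous φ → (∀ l, ‖φ l‖ ≤ C) →
      IntervalIntegrable (fun l => φ l * (h l : ℂ)) volume (-P) P := by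
    intro φ C hφ hC
    apply IntervalIntegrable.mono_fun ((hint.norm).const_mul C)
      (hφ.aestronglyMeasurable.mul hmeasC)
    filter_upwards with l
    show ‖φ l * (h l : ℂ)‖ ≤ ‖C * ‖h l‖‖
    rw [norm_mul, Complex.norm_real]
    calc ‖φ l‖ * ‖h l‖ ≤ C * ‖h l‖ :=
          mul_le_mul_of_nonneg_right (hC l) (norm_nonneg _)
    _ ≤ ‖C * ‖h l‖‖ := by
          rw [Real.norm_eq_abs]
          exact le_abs_self _
  have hKbound : ∀ (z : ℂ), ‖z‖ < 1 → ∀ l, ‖(aK l + z)/(aK l - z)‖ ≤ (1 + ‖z‖)/(1 - ‖z‖) := by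
    intro z hz l
    rw [norm_div]
    apply div_le_div₀ (by positivity)
      ((norm_add_le _ _).trans (by rw [haK1])) (by linarith) (haKlb z hz l)
  have hKint : ∀ (z : ℂ), ‖z‖ < 1 →
      IntervalIntegrable (fun l => (aK l + z)/(aK l - z) * (h l : ℂ)) volume (-P) P := by
    intro z hz
    exact hintmul _ _ (((haKc.add continuous_const).div (haKc.sub continuous_const)
      (haKne z hz))) (hKbound z hz)
  -- the denominator is positive
  have hD : ∀ (r : ℝ), 0 < r → r < 1 → ∀ l, 0 < 1 - 2*r*Real.cos l + r^2 := by
    intro r hr0 hr1 l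
    nlinarith [Real.cos_le_one l, Real.neg_one_le_cos l]
  -- realness / symmetrization
  have hsym : ∀ r : ℝ, 0 < r → r < 1 →
      (∫ l in (-P)..P, (aK l + (r:ℂ))/(aK l - (r:ℂ)) * (h l : ℂ)) =
      ((∫ l in (-P)..P, (1-r^2)/(1-2*r*Real.cos l+r^2) * h l : ℝ) : ℂ) := by
    intro r hr0 hr1
    have hrc : ‖(r:ℂ)‖ < 1 := by rwa [Complex.norm_real, Real.norm_eq_abs, abs_of_pos hr0]
    have hint1 : IntervalIntegrable (fun l => (aK l + (r:ℂ))/(aK l - (r:ℂ)) * (h l : ℂ))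
        volume (-P) P := hKint _ hrc
    have hint2' : IntervalIntegrable (fun l => (aK (-l) + (r:ℂ))/(aK (-l) - (r:ℂ)) * (h l : ℂ))
        volume (-P) P := by
      apply hintmul _ ((1 + ‖(r:ℂ)‖)/(1 - ‖(r:ℂ)‖))
      · exact ((haKc.comp continuous_neg).add continuous_const).div
          ((haKc.comp continuous_neg).sub continuous_const) (fun l => haKne _ hrc (-l))
      · intro l; exact hKbound _ hrc (-l)
    have hflip : (∫ l in (-P)..P, (aK l + (r:ℂ))/(aK l - (r:ℂ)) * (h l : ℂ)) =
        ∫ l in (-P)..P, (aK (-l) + (r:ℂ))/(aK (-l) - (r:ℂ)) * (h l : ℂ) := by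
      have hcn := intervalIntegral.integral_comp_neg
        (a := -P) (b := P) (f := fun l => (aK l + (r:ℂ))/(aK l - (r:ℂ)) * (h l : ℂ))
      rw [neg_neg] at hcn
      rw [← hcn]
      apply intervalIntegral.integral_congr
      intro l _
      simp only [heven l]
    have hpt : ∀ l : ℝ, (aK l + (r:ℂ))/(aK l - (r:ℂ)) * (h l : ℂ) +
        (aK (-l) + (r:ℂ))/(aK (-l) - (r:ℂ)) * (h l : ℂ) =
        2 * (((1-r^2)/(1-2*r*Real.cos l+r^2) * h l : ℝ) : ℂ) := by
      intro l
      have ha : aK l * aK (-l) = 1 := by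
        rw [haK]; simp only; rw [← Complex.exp_add]; push_cast; ring_nf; exact Complex.exp_zero
      have hsum : aK l + aK (-l) = 2 * Complex.cos (l:ℂ) := by
        rw [haK]; simp only
        rw [mul_comm Complex.I (l:ℂ), show ((-l : ℝ):ℂ) = -(l:ℂ) by push_cast; ring,
          mul_comm Complex.I (-(l:ℂ)), Complex.exp_mul_I, Complex.exp_mul_I]
        rw [Complex.cos_neg, Complex.sin_neg]
        ring
      have hne1 : aK l - (r:ℂ) ≠ 0 := haKne _ hrc l
      have hne2 : aK (-l) - (r:ℂ) ≠ 0 := haKne _ hrc (-l)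
      have hDcast : (1:ℂ) - 2*(r:ℂ)*Complex.cos (l:ℂ) + (r:ℂ)^2
          = ((1-2*r*Real.cos l+r^2 : ℝ) : ℂ) := by push_cast; ring
      have hDne : (1:ℂ) - 2*(r:ℂ)*Complex.cos (l:ℂ) + (r:ℂ)^2 ≠ 0 := by
        rw [hDcast]; exact Complex.ofReal_ne_zero.mpr (hD r hr0 hr1 l).ne'
      have key : (aK l + (r:ℂ))/(aK l - (r:ℂ)) + (aK (-l) + (r:ℂ))/(aK (-l) - (r:ℂ))
          = 2 * (1-(r:ℂ)^2) / (1 - 2*(r:ℂ)*Complex.cos (l:ℂ) + (r:ℂ)^2) := by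
        rw [div_add_div _ _ hne1 hne2, div_eq_div_iff (mul_ne_zero hne1 hne2) hDne]
        linear_combination (2*(1 - 2*(r:ℂ)*Complex.cos (l:ℂ) + (r:ℂ)^2) - 2*(1-(r:ℂ)^2)) * ha +
          2*(r:ℂ)*(1-(r:ℂ)^2) * hsum
      push_cast
      linear_combination (h l : ℂ) * key
    have hdouble : (2:ℂ) * (∫ l in (-P)..P, (aK l + (r:ℂ))/(aK l - (r:ℂ)) * (h l : ℂ))
        = ∫ l in (-P)..P, (2:ℂ) * (((1-r^2)/(1-2*r*Real.cos l+r^2) * h l : ℝ) : ℂ) := by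
      rw [two_mul]
      nth_rewrite 2 [hflip]
      rw [← intervalIntegral.integral_add hint1 hint2']
      apply intervalIntegral.integral_congr
      intro l _
      exact hpt l
    have := hdouble
    rw [intervalIntegral.integral_const_mul, intervalIntegral.integral_ofReal] at this
    exact mul_left_cancel₀ two_ne_zero this
  have hbad : ∀ᵐ l : ℝ ∂volume, Real.cos l ≠ 1 := by
    rw [ae_iff]
    have hcnt : {l : ℝ | Real.cos l = 1}.Countable := by
      have hsub : {l : ℝ | Real.cos l = 1} ⊆ Set.range (fun n : ℤ => (n:ℝ) * (2*Real.pi)) := by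
        intro x hx
        obtain ⟨n, hn⟩ := (Real.cos_eq_one_iff x).1 hx
        exact ⟨n, hn⟩
      exact (Set.countable_range _).mono hsub
    simpa using hcnt.measure_zero volume
  have hIoo : Set.Ioo (1/2:ℝ) 1 ∈ 𝓝[<] (1:ℝ) := Ioo_mem_nhdsLT (by norm_num)
  -- J r → 0
  have hJ0 : Filter.Tendsto (fun r : ℝ => ∫ l in (-P)..P, (1-r^2)/(1-2*r*Real.cos l+r^2) * h l)
      (𝓝[<] 1) (𝓝 0) := by
    have hdct := intervalIntegral.tendsto_integral_filter_of_dominated_convergence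
      (μ := volume) (a := -P) (b := P) (l := 𝓝[<] (1:ℝ))
      (F := fun r l => (1-r^2)/(1-2*r*Real.cos l+r^2) * h l)
      (f := fun _ => (0:ℝ)) (bound := fun l => |h l|/(1-Real.cos l)) ?_ ?_ hint2 ?_
    · simpa using hdct
    · filter_upwards [hIoo] with r hr
      have hcont : Continuous (fun l => (1-r^2)/(1-2*r*Real.cos l+r^2)) := by
        apply continuous_const.div (by fun_prop)
        intro l
        exact (hD r (by linarith [hr.1]) hr.2 l).ne'
      exact hcont.aestronglyMeasurable.mul hmeas
    · filter_upwards [hIoo] with r hr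
      filter_upwards [hbad] with l hl hmem
      have hc1 : Real.cos l < 1 := lt_of_le_of_ne (Real.cos_le_one l) hl
      have hDpos := hD r (by linarith [hr.1]) hr.2 l
      rw [Real.norm_eq_abs, abs_mul]
      have hS0 : 0 ≤ (1-r^2)/(1-2*r*Real.cos l+r^2) :=
        div_nonneg (by nlinarith [hr.1, hr.2]) hDpos.le
      rw [abs_of_nonneg hS0]
      have hSle : (1-r^2)/(1-2*r*Real.cos l+r^2) ≤ 1/(1-Real.cos l) := by
        apply div_le_div₀ (by norm_num) (by nlinarith [hr.1, hr.2]) (by linarith)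
        nlinarith [sq_nonneg (1-r), hr.1, hr.2]
      calc (1-r^2)/(1-2*r*Real.cos l+r^2) * |h l| ≤ 1/(1-Real.cos l) * |h l| :=
            mul_le_mul_of_nonneg_right hSle (abs_nonneg _)
      _ = |h l|/(1-Real.cos l) := by ring
    · filter_upwards [hbad] with l hl hmem
      have hc1 : Real.cos l < 1 := lt_of_le_of_ne (Real.cos_le_one l) hl
      have hnum : Filter.Tendsto (fun r:ℝ => 1-r^2) (𝓝 (1:ℝ)) (𝓝 0) := by
        have hcont : Continuous (fun r:ℝ => 1-r^2) := by fun_prop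
        have := hcont.tendsto 1
        norm_num at this
        exact this
      have hden : Filter.Tendsto (fun r:ℝ => 1-2*r*Real.cos l+r^2) (𝓝 (1:ℝ))
          (𝓝 (2-2*Real.cos l)) := by
        have hcont : Continuous (fun r:ℝ => 1-2*r*Real.cos l+r^2) := by fun_prop
        have := hcont.tendsto 1
        convert this using 2
        ring
      have := ((hnum.div hden (by linarith)).mul_const (h l)).mono_left
        (nhdsWithin_le_nhds (s := Set.Iio (1:ℝ)))
      simpa using this
  -- ∫ T r l h l → -∫ h/(1-cos)
  have hJd : Filter.Tendsto (fun r : ℝ => ∫ l in (-P)..P,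
        (-(1+r)/(1-2*r*Real.cos l+r^2)) * h l)
      (𝓝[<] 1) (𝓝 (-∫ l in (-P)..P, h l / (1 - Real.cos l))) := by
    have hdct := intervalIntegral.tendsto_integral_filter_of_dominated_convergence
      (μ := volume) (a := -P) (b := P) (l := 𝓝[<] (1:ℝ))
      (F := fun r l => (-(1+r)/(1-2*r*Real.cos l+r^2)) * h l)
      (f := fun l => -(h l / (1-Real.cos l))) (bound := fun l => 2 * (|h l|/(1-Real.cos l)))
      ?_ ?_ (hint2.const_mul 2) ?_
    · rw [intervalIntegral.integral_neg] at hdct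
      exact hdct
    · filter_upwards [hIoo] with r hr
      have hcont : Continuous (fun l => -(1+r)/(1-2*r*Real.cos l+r^2)) := by
        apply continuous_const.div (by fun_prop)
        intro l
        exact (hD r (by linarith [hr.1]) hr.2 l).ne'
      exact hcont.aestronglyMeasurable.mul hmeas
    · filter_upwards [hIoo] with r hr
      filter_upwards [hbad] with l hl hmem
      have hc1 : Real.cos l < 1 := lt_of_le_of_ne (Real.cos_le_one l) hl
      have hDpos := hD r (by linarith [hr.1]) hr.2 l
      rw [Real.norm_eq_abs, abs_mul, abs_div, abs_neg, abs_of_pos (by linarith [hr.1] : (0:ℝ) < 1+r),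
        abs_of_pos hDpos]
      have hTle : (1+r)/(1-2*r*Real.cos l+r^2) ≤ 2/(1-Real.cos l) := by
        apply div_le_div₀ (by norm_num) (by linarith [hr.2]) (by linarith)
        nlinarith [sq_nonneg (1-r), hr.1, hr.2]
      calc (1+r)/(1-2*r*Real.cos l+r^2) * |h l| ≤ 2/(1-Real.cos l) * |h l| :=
            mul_le_mul_of_nonneg_right hTle (abs_nonneg _)
      _ = 2 * (|h l|/(1-Real.cos l)) := by ring
    · filter_upwards [hbad] with l hl hmem
      have hc1 : Real.cos l < 1 := lt_of_le_of_ne (Real.cos_le_one l) hl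
      have hnum : Filter.Tendsto (fun r:ℝ => -(1+r)) (𝓝 (1:ℝ)) (𝓝 (-2)) := by
        have hcont : Continuous (fun r:ℝ => -(1+r)) := by fun_prop
        convert hcont.tendsto 1 using 2
        norm_num
      have hden : Filter.Tendsto (fun r:ℝ => 1-2*r*Real.cos l+r^2) (𝓝 (1:ℝ))
          (𝓝 (2-2*Real.cos l)) := by
        have hcont : Continuous (fun r:ℝ => 1-2*r*Real.cos l+r^2) := by fun_prop
        have := hcont.tendsto 1
        convert this using 2
        ring
      have hlim := ((hnum.div hden (by linarith)).mul_const (h l)).mono_left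
        (nhdsWithin_le_nhds (s := Set.Iio (1:ℝ)))
      have heq : -2/(2-2*Real.cos l) * h l = -(h l/(1-Real.cos l)) := by
        rw [neg_div, neg_mul, neg_inj, div_mul_eq_mul_div,
          div_eq_div_iff (by linarith) (by linarith)]
        ring
      rw [heq] at hlim
      exact hlim
  -- division identity  -- division identity : J r / (r-1) = ∫ T r l h l for r ≠ 1
  have hdiv : ∀ r : ℝ, r ≠ 1 →
      (∫ l in (-P)..P, (1-r^2)/(1-2*r*Real.cos l+r^2) * h l) / (r - 1) =
      ∫ l in (-P)..P, (-(1+r)/(1-2*r*Real.cos l+r^2)) * h l := by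
    intro r hr
    rw [← intervalIntegral.integral_div]
    apply intervalIntegral.integral_congr
    intro l _
    rcases eq_or_ne (1-2*r*Real.cos l+r^2) 0 with hD0 | hD0
    · simp [hD0]
    · have hr1 : r - 1 ≠ 0 := sub_ne_zero.mpr hr
      field_simp
      ring
  -- analyticity
  have hQanal : AnalyticOnNhd ℂ Q (Metric.ball 0 1) := by
    have hdiff : DifferentiableOn ℂ Q (Metric.ball 0 1) := by
      intro z₀ hz₀
      rw [Metric.mem_ball, dist_zero_right] at hz₀
      set ρ : ℝ := (1 + ‖z₀‖)/2 with hρ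
      have hρ1 : ρ < 1 := by rw [hρ]; linarith
      have hρ0 : 0 < 1 - ρ := by linarith
      set ε : ℝ := (1 - ‖z₀‖)/2 with hε
      have hε0 : 0 < ε := by rw [hε]; linarith
      have hball : ∀ x ∈ Metric.ball z₀ ε, ‖x‖ < ρ := by
        intro x hx
        rw [Metric.mem_ball, dist_eq_norm] at hx
        calc ‖x‖ = ‖z₀ + (x - z₀)‖ := by ring_nf
        _ ≤ ‖z₀‖ + ‖x - z₀‖ := norm_add_le _ _
        _ < ‖z₀‖ + ε := by linarith
        _ = ρ := by rw [hε, hρ]; ring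
      have key := intervalIntegral.hasDerivAt_integral_of_dominated_loc_of_deriv_le
        (μ := volume) (a := -P) (b := P)
        (F := fun z l => (aK l + z)/(aK l - z) * (h l : ℂ))
        (F' := fun z l => 2*aK l/(aK l - z)^2 * (h l : ℂ)) (x₀ := z₀)
        (bound := fun l => 2/(1-ρ)^2 * ‖h l‖) (Metric.ball_mem_nhds z₀ hε0) ?_ (hKint z₀ hz₀) ?_ ?_ ?_ ?_
      · rw [hQ]
        exact (((key.2.const_mul ((1 / (2 * (P:ℝ)) : ℂ))).cexp).differentiableAt).differentiableWithinAt
      · filter_upwards [Metric.ball_mem_nhds z₀ hε0] with x hx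
        have hx1 : ‖x‖ < 1 := lt_trans (hball x hx) hρ1
        exact (((haKc.add continuous_const).div (haKc.sub continuous_const)
          (haKne x hx1)).aestronglyMeasurable).mul hmeasC
      · have hz1 : ‖z₀‖ < 1 := hz₀
        exact (((continuous_const.mul haKc).div ((haKc.sub continuous_const).pow 2)
          (fun l => pow_ne_zero 2 (haKne z₀ hz1 l))).aestronglyMeasurable).mul hmeasC
      · filter_upwards with t ht
        intro x hx
        have hx1 : ‖x‖ < 1 := lt_trans (hball x hx) hρ1
        have hlb : 1 - ρ ≤ ‖aK t - x‖ := le_trans (by linarith [hball x hx]) (haKlb x hx1 t)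
        rw [norm_mul, norm_div, norm_mul, norm_pow, haK1, Complex.norm_real]
        have h2 : ‖(2:ℂ)‖ = 2 := by norm_num
        rw [h2, mul_one, Real.norm_eq_abs]
        apply mul_le_mul_of_nonneg_right _ (abs_nonneg _)
        apply div_le_div₀ (by norm_num) le_rfl (by positivity)
        exact pow_le_pow_left₀ hρ0.le hlb 2
      · exact (hint.norm).const_mul _
      · filter_upwards with t ht
        intro x hx
        have hx1 : ‖x‖ < 1 := lt_trans (hball x hx) hρ1
        have hne : aK t - x ≠ 0 := haKne x hx1 t
        have h1 : HasDerivAt (fun z : ℂ => aK t + z) 1 x := (hasDerivAt_id x).const_add _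
        have h2 : HasDerivAt (fun z : ℂ => aK t - z) (-1) x := by
          simpa using (hasDerivAt_id x).const_sub (aK t)
        have hder := h1.div h2 hne
        rw [show (1*(aK t - x) - (aK t + x)*(-1)) = 2*aK t from by ring] at hder
        exact hder.mul_const _
    exact hdiff.analyticOnNhd Metric.isOpen_ball
  have hIoo01 : Set.Ioo (0:ℝ) 1 ∈ 𝓝[<] (1:ℝ) := Ioo_mem_nhdsLT (by norm_num)
  set J : ℝ → ℝ := fun r => ∫ l in (-P)..P, (1-r^2)/(1-2*r*Real.cos l+r^2) * h l with hJdef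
  have hw0 : Filter.Tendsto (fun r : ℝ => (1/(2*(P:ℝ)) : ℂ) * ((J r : ℝ) : ℂ))
      (𝓝[<] 1) (𝓝 0) := by
    have h1 : Filter.Tendsto (fun r : ℝ => ((J r : ℝ) : ℂ)) (𝓝[<] 1) (𝓝 0) := by
      have := (Complex.continuous_ofReal.tendsto 0).comp hJ0
      simpa [Function.comp_def] using this
    simpa using h1.const_mul ((1/(2*(P:ℝ)) : ℂ))
  have hQrep : (fun r : ℝ => Q (r:ℂ)) =ᶠ[𝓝[<] (1:ℝ)]
      (fun r : ℝ => Complex.exp ((1/(2*(P:ℝ)) : ℂ) * ((J r : ℝ) : ℂ))) := by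
    filter_upwards [hIoo01] with r hr
    rw [hQ]
    simp only
    rw [hsym r hr.1 hr.2]
  refine ⟨hQanal, ?_, ?_, ?_⟩
  · -- Q(r) → 1
    have hlim : Filter.Tendsto (fun r : ℝ =>
        Complex.exp ((1/(2*(P:ℝ)) : ℂ) * ((J r : ℝ) : ℂ))) (𝓝[<] 1) (𝓝 1) := by
      have hexp : Filter.Tendsto Complex.exp (𝓝 0) (𝓝 1) := by
        have := Complex.continuous_exp.tendsto (0:ℂ)
        rwa [Complex.exp_zero] at this
      exact hexp.comp hw0
    exact hlim.congr' hQrep.symm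
  · -- group delay
    set φ : ℂ → ℂ := fun w => if w = 0 then 1 else (Complex.exp w - 1)/w with hφdef
    have hφ1 : Filter.Tendsto φ (𝓝 0) (𝓝 1) := by
      rw [← nhdsNE_sup_pure (0:ℂ), Filter.tendsto_sup]
      constructor
      · have hd : HasDerivAt Complex.exp 1 0 := by simpa using Complex.hasDerivAt_exp 0
        have hs := hasDerivAt_iff_tendsto_slope.mp hd
        apply hs.congr'
        filter_upwards [self_mem_nhdsWithin] with w hw
        have hw' : w ≠ 0 := hw
        rw [hφdef]
        simp only [if_neg hw']
        rw [slope_def_field]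
        simp [Complex.exp_zero]
      · simpa [hφdef] using tendsto_pure_nhds φ 0
    have hφlim : Filter.Tendsto (fun r : ℝ => φ ((1/(2*(P:ℝ)):ℂ) * ((J r : ℝ):ℂ)))
        (𝓝[<] 1) (𝓝 1) := hφ1.comp hw0
    have hu : Filter.Tendsto (fun r : ℝ => (1/(2*P)) * (J r/(r-1))) (𝓝[<] 1) (𝓝 GD) := by
      have h1 : Filter.Tendsto (fun r : ℝ => J r/(r-1)) (𝓝[<] 1)
          (𝓝 (-∫ l in (-P)..P, h l/(1-Real.cos l))) := by
        apply Filter.Tendsto.congr' _ hJd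
        filter_upwards [hIoo01] with r hr
        exact (hdiv r hr.2.ne).symm
      have h2 : GD = (1/(2*P)) * (-∫ l in (-P)..P, h l/(1-Real.cos l)) := by rw [hGD]; ring
      rw [h2]
      exact h1.const_mul (1/(2*P))
    have huC : Filter.Tendsto (fun r : ℝ => ((((1/(2*P)) * (J r/(r-1))) : ℝ) : ℂ))
        (𝓝[<] 1) (𝓝 (GD:ℂ)) := by
      exact (Complex.continuous_ofReal.tendsto GD).comp hu
    have hprod := hφlim.mul huC
    rw [one_mul] at hprod
    apply hprod.congr'
    filter_upwards [hIoo01, hQrep] with r hr hQr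
    rw [hQr]
    set w : ℂ := (1/(2*(P:ℝ)):ℂ) * ((J r:ℝ):ℂ) with hwdef
    have hr1 : ((r:ℂ) - 1) ≠ 0 := sub_ne_zero.mpr (by exact_mod_cast hr.2.ne)
    have hcast : ((((1/(2*P)) * (J r/(r-1))) : ℝ) : ℂ) = w / ((r:ℂ) - 1) := by
      rw [hwdef]; push_cast; ring
    rw [hcast]
    by_cases h0 : w = 0
    · simp only [h0, Complex.exp_zero, sub_self, zero_div, mul_zero]
    · rw [hφdef]
      simp only [if_neg h0]
      exact div_mul_div_cancel₀ h0
  · -- Kolmogorov relation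
    have hcosne : ∀ᵐ l : ℝ ∂(volume.restrict (Set.uIoc (-P) P)), Real.cos l ≠ 1 :=
      ae_restrict_of_ae hbad
    have hint3 : IntervalIntegrable (fun l => h l/(1-Real.cos l)) volume (-P) P := by
      apply hint2.mono_fun
        ((hmeas.aemeasurable.div
          ((continuous_const.sub Real.continuous_cos).measurable.aemeasurable)).aestronglyMeasurable)
      filter_upwards with l
      simp only [Pi.div_apply, Pi.sub_apply]
      rw [Real.norm_eq_abs, Real.norm_eq_abs, abs_div, abs_div, abs_abs,
        abs_of_nonneg (by linarith [Real.cos_le_one l] : (0:ℝ) ≤ 1 - Real.cos l)]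
    have hcongr : (∫ l in (-P)..P, Real.cos l/(1-Real.cos l) * h l) =
        ∫ l in (-P)..P, (h l/(1-Real.cos l) - h l) := by
      apply intervalIntegral.integral_congr_ae
      filter_upwards [hbad] with l hl hmem
      have hcl : (1:ℝ) - Real.cos l ≠ 0 := by
        have := lt_of_le_of_ne (Real.cos_le_one l) hl
        intro hcon
        exact absurd (by linarith : Real.cos l = 1) hl
      rw [div_mul_eq_mul_div, show h l/(1-Real.cos l) - h l
          = (h l - h l*(1-Real.cos l))/(1-Real.cos l) by
        rw [sub_div, mul_div_assoc, div_self hcl, mul_one]]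
      congr 1
      ring
    rw [intervalIntegral.integral_sub hint3 hint] at hcongr
    rw [hGD, hc, hcongr]
    congr 1
    ring
end

section
/- Let ψ : ℕ → ℝ satisfy Σ_{n≥0} (n+1)·|ψ_n| < ∞ and Σ_{n≥0} ψ_n = 1, and define the autocovariances b_k = Σ_{n≥0} ψ_n ψ_{n+k} for k ≥ 1 (all series converge absolutely). Then the retailer's inventory variance satisfies the exact identity Σ_{n≥0} (Σ_{k=0}^{n−1} ψ_k − 1)² = 1 + Σ_{n≥1} n·ψ_n − Σ_{k≥1} k·b_k; that is, σ_I²(ψ) = 1 + GD(ψ) − (1/2)·∂_r f_ψ(1), where GD(ψ) = Σ_{n≥1} n·ψ_n is the group delay and (1/2)·∂_r f_ψ(1) = Σ_{k≥1} k·b_k is half the radial derivative at 1 of the spectral density's harmonic extension. -/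
set_option maxHeartbeats 1000000

section Aux
variable (ψ : ℕ → ℝ)

-- basic summabilities
lemma aux_habs (h1 : Summable (fun n : ℕ => ((n : ℝ) + 1) * |ψ n|)) :
    Summable (fun n : ℕ => |ψ n|) := by
  refine Summable.of_nonneg_of_le (fun n => abs_nonneg _) (fun n => ?_) h1
  nlinarith [abs_nonneg (ψ n), Nat.cast_nonneg (α := ℝ) n]

lemma aux_hnψ (h1 : Summable (fun n : ℕ => ((n : ℝ) + 1) * |ψ n|)) :
    Summable (fun n : ℕ => (n : ℝ) * ψ n) := by
  refine Summable.of_norm_bounded h1 (fun n => ?_)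
  rw [Real.norm_eq_abs, abs_mul, Nat.abs_cast]
  nlinarith [abs_nonneg (ψ n), Nat.cast_nonneg (α := ℝ) n]

lemma aux_hker (h1 : Summable (fun n : ℕ => ((n : ℝ) + 1) * |ψ n|)) (k : ℕ) :
    Summable (fun n : ℕ => ψ n * ψ (n + k)) := by
  have habs := aux_habs ψ h1
  have hC : ∀ m, |ψ m| ≤ ∑' m, |ψ m| := fun m => Summable.le_tsum habs m (fun _ _ => abs_nonneg _)
  refine Summable.of_norm_bounded (habs.mul_right (∑' m, |ψ m|)) (fun n => ?_)
  rw [Real.norm_eq_abs, abs_mul]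
  exact mul_le_mul_of_nonneg_left (hC _) (abs_nonneg _)

end Aux

section Aux2
variable (ψ : ℕ → ℝ)

/-- weight family on pairs -/
lemma aux_hW (h1 : Summable (fun n : ℕ => ((n : ℝ) + 1) * |ψ n|)) :
    Summable (fun p : ℕ × ℕ => (((p.1 : ℝ) + 1) * |ψ p.1|) * (((p.2 : ℝ) + 1) * |ψ p.2|)) := by
  refine h1.mul_of_nonneg h1 (fun n => ?_) (fun n => ?_) <;> positivity

lemma aux_hG (h1 : Summable (fun n : ℕ => ((n : ℝ) + 1) * |ψ n|)) :
    Summable (fun p : ℕ × ℕ => ((min p.1 p.2 : ℕ) + 1 : ℝ) * (ψ p.1 * ψ p.2)) := by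
  refine Summable.of_norm_bounded (aux_hW ψ h1) (fun p => ?_)
  rw [Real.norm_eq_abs, abs_mul, abs_mul,
    abs_of_nonneg (by positivity : (0:ℝ) ≤ ((min p.1 p.2 : ℕ) : ℝ) + 1)]
  have h2 : ((min p.1 p.2 : ℕ) : ℝ) + 1 ≤ (p.1 : ℝ) + 1 := by
    have := Nat.min_le_left p.1 p.2; exact by exact_mod_cast Nat.succ_le_succ this
  have h3 : (1:ℝ) ≤ (p.2:ℝ) + 1 := by have := Nat.cast_nonneg (α := ℝ) p.2; linarith
  calc ((min p.1 p.2 : ℕ) + 1 : ℝ) * (|ψ p.1| * |ψ p.2|)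
      ≤ ((p.1:ℝ)+1) * (|ψ p.1| * |ψ p.2|) :=
        mul_le_mul_of_nonneg_right h2 (by positivity)
    _ ≤ (((p.1:ℝ)+1) * ((p.2:ℝ)+1)) * (|ψ p.1| * |ψ p.2|) := by
        refine mul_le_mul_of_nonneg_right ?_ (by positivity)
        nlinarith [Nat.cast_nonneg (α := ℝ) p.1]
    _ = (((p.1:ℝ)+1) * |ψ p.1|) * (((p.2:ℝ)+1) * |ψ p.2|) := by ring

lemma aux_hD (h1 : Summable (fun n : ℕ => ((n : ℝ) + 1) * |ψ n|)) :
    Summable (fun p : ℕ × ℕ => |(p.1 : ℝ) - (p.2 : ℝ)| * (ψ p.1 * ψ p.2)) := by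
  refine Summable.of_norm_bounded (aux_hW ψ h1) (fun p => ?_)
  rw [Real.norm_eq_abs, abs_mul, abs_mul, abs_abs]
  have h2 : |(p.1 : ℝ) - (p.2 : ℝ)| ≤ ((p.1:ℝ)+1) * ((p.2:ℝ)+1) := by
    rw [abs_sub_le_iff]
    constructor <;> nlinarith [Nat.cast_nonneg (α := ℝ) p.1, Nat.cast_nonneg (α := ℝ) p.2]
  calc |(p.1 : ℝ) - (p.2 : ℝ)| * (|ψ p.1| * |ψ p.2|)
      ≤ (((p.1:ℝ)+1) * ((p.2:ℝ)+1)) * (|ψ p.1| * |ψ p.2|) :=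
        mul_le_mul_of_nonneg_right h2 (by positivity)
    _ = (((p.1:ℝ)+1) * |ψ p.1|) * (((p.2:ℝ)+1) * |ψ p.2|) := by ring

lemma aux_hA1 (h1 : Summable (fun n : ℕ => ((n : ℝ) + 1) * |ψ n|)) :
    Summable (fun p : ℕ × ℕ => ((p.1 : ℝ) + 1) * (ψ p.1 * ψ p.2)) := by
  refine Summable.of_norm_bounded (aux_hW ψ h1) (fun p => ?_)
  rw [Real.norm_eq_abs, abs_mul, abs_mul,
    abs_of_nonneg (by positivity : (0:ℝ) ≤ (p.1:ℝ) + 1)]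
  calc ((p.1:ℝ)+1) * (|ψ p.1| * |ψ p.2|)
      ≤ (((p.1:ℝ)+1) * ((p.2:ℝ)+1)) * (|ψ p.1| * |ψ p.2|) := by
        refine mul_le_mul_of_nonneg_right ?_ (by positivity)
        nlinarith [Nat.cast_nonneg (α := ℝ) p.1, Nat.cast_nonneg (α := ℝ) p.2]
    _ = (((p.1:ℝ)+1) * |ψ p.1|) * (((p.2:ℝ)+1) * |ψ p.2|) := by ring

lemma aux_hA2 (h1 : Summable (fun n : ℕ => ((n : ℝ) + 1) * |ψ n|)) :
    Summable (fun p : ℕ × ℕ => ((p.2 : ℝ) + 1) * (ψ p.1 * ψ p.2)) := by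
  refine Summable.of_norm_bounded (aux_hW ψ h1) (fun p => ?_)
  rw [Real.norm_eq_abs, abs_mul, abs_mul,
    abs_of_nonneg (by positivity : (0:ℝ) ≤ (p.2:ℝ) + 1)]
  calc ((p.2:ℝ)+1) * (|ψ p.1| * |ψ p.2|)
      ≤ (((p.1:ℝ)+1) * ((p.2:ℝ)+1)) * (|ψ p.1| * |ψ p.2|) := by
        refine mul_le_mul_of_nonneg_right ?_ (by positivity)
        nlinarith [Nat.cast_nonneg (α := ℝ) p.1, Nat.cast_nonneg (α := ℝ) p.2]
    _ = (((p.1:ℝ)+1) * |ψ p.1|) * (((p.2:ℝ)+1) * |ψ p.2|) := by ring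

lemma aux_pointwise (p : ℕ × ℕ) :
    2 * (((min p.1 p.2 : ℕ) + 1 : ℝ) * (ψ p.1 * ψ p.2)) =
      ((p.1 : ℝ) + 1) * (ψ p.1 * ψ p.2) + ((p.2 : ℝ) + 1) * (ψ p.1 * ψ p.2)
        - |(p.1 : ℝ) - (p.2 : ℝ)| * (ψ p.1 * ψ p.2) := by
  rcases le_total p.1 p.2 with h | h
  · have hle : ((p.1:ℝ)) ≤ (p.2:ℝ) := by exact_mod_cast h
    rw [min_eq_left h, abs_of_nonpos (by linarith : (p.1:ℝ) - (p.2:ℝ) ≤ 0)]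
    push_cast; ring
  · have hle : ((p.2:ℝ)) ≤ (p.1:ℝ) := by exact_mod_cast h
    rw [min_eq_right h, abs_of_nonneg (by linarith : (0:ℝ) ≤ (p.1:ℝ) - (p.2:ℝ))]
    push_cast; ring

end Aux2

section Aux3
variable (ψ : ℕ → ℝ)

noncomputable def Ffun : ℕ × ℕ → ℝ := fun q => (q.1 : ℝ) * (ψ q.2 * ψ (q.2 + q.1))

lemma aux_g1_inj : Function.Injective (fun q : ℕ × ℕ => (q.2, q.2 + q.1)) := by
  intro a b h
  simp only [Prod.mk.injEq] at h
  obtain ⟨h2, h1⟩ := h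
  exact Prod.ext (by omega) h2

lemma aux_g2_inj : Function.Injective (fun q : ℕ × ℕ => (q.2 + q.1, q.2)) := by
  intro a b h
  simp only [Prod.mk.injEq] at h
  obtain ⟨h1, h2⟩ := h
  exact Prod.ext (by omega) h2

lemma aux_hF (h1 : Summable (fun n : ℕ => ((n : ℝ) + 1) * |ψ n|)) :
    Summable (Ffun ψ) ∧
    (∑' p : ℕ × ℕ, |(p.1 : ℝ) - (p.2 : ℝ)| * (ψ p.1 * ψ p.2)) = 2 * ∑' q : ℕ × ℕ, Ffun ψ q := by
  set D : ℕ × ℕ → ℝ := fun p => |(p.1 : ℝ) - (p.2 : ℝ)| * (ψ p.1 * ψ p.2) with hDdef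
  set D1 : ℕ × ℕ → ℝ := fun p => if p.1 ≤ p.2 then D p else 0 with hD1def
  set D2 : ℕ × ℕ → ℝ := fun p => if p.2 < p.1 then D p else 0 with hD2def
  have hD : Summable D := aux_hD ψ h1
  have hD1 : Summable D1 := by
    refine Summable.of_norm_bounded hD.abs (fun p => ?_)
    simp only [hD1def]
    split <;> simp [abs_nonneg, le_abs_self, Real.norm_eq_abs, abs_abs]
  have hD2 : Summable D2 := by
    refine Summable.of_norm_bounded hD.abs (fun p => ?_)
    simp only [hD2def]
    split <;> simp [abs_nonneg, le_abs_self, Real.norm_eq_abs, abs_abs]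
  have hg1 : ∀ q : ℕ × ℕ, D1 (q.2, q.2 + q.1) = Ffun ψ q := by
    intro q
    simp only [hD1def, hDdef, Ffun]
    rw [if_pos (Nat.le_add_right _ _)]
    have : |(q.2 : ℝ) - ((q.2 + q.1 : ℕ) : ℝ)| = (q.1 : ℝ) := by
      push_cast
      rw [abs_of_nonpos (by linarith [Nat.cast_nonneg (α := ℝ) q.1] : (q.2:ℝ) - ((q.2:ℝ) + q.1) ≤ 0)]
      ring
    rw [this]
  have hg2 : ∀ q : ℕ × ℕ, D2 (q.2 + q.1, q.2) = Ffun ψ q := by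
    intro q
    simp only [hD2def, hDdef, Ffun]
    by_cases h : 0 < q.1
    · rw [if_pos (by omega : q.2 < q.2 + q.1)]
      have : |((q.2 + q.1 : ℕ) : ℝ) - (q.2 : ℝ)| = (q.1 : ℝ) := by
        push_cast
        rw [abs_of_nonneg (by linarith [Nat.cast_nonneg (α := ℝ) q.1] : (0:ℝ) ≤ (q.2:ℝ) + q.1 - q.2)]
        ring
      rw [this]; ring
    · have h0 : q.1 = 0 := by omega
      rw [if_neg (by omega : ¬ q.2 < q.2 + q.1), h0]
      simp
  have hF : Summable (Ffun ψ) :=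
    (hD1.comp_injective (aux_g1_inj)).congr hg1
  refine ⟨hF, ?_⟩
  have hsupp1 : Function.support D1 ⊆ Set.range (fun q : ℕ × ℕ => (q.2, q.2 + q.1)) := by
    intro p hp
    have hle : p.1 ≤ p.2 := by
      by_contra hcon
      exact hp (by simp only [hD1def]; rw [if_neg hcon])
    refine ⟨(p.2 - p.1, p.1), ?_⟩
    show (p.1, p.1 + (p.2 - p.1)) = p
    exact Prod.ext rfl (by omega)
  have hsupp2 : Function.support D2 ⊆ Set.range (fun q : ℕ × ℕ => (q.2 + q.1, q.2)) := by
    intro p hp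
    have hle : p.2 < p.1 := by
      by_contra hcon
      exact hp (by simp only [hD2def]; rw [if_neg hcon])
    refine ⟨(p.1 - p.2, p.2), ?_⟩
    show (p.2 + (p.1 - p.2), p.2) = p
    exact Prod.ext (by omega) rfl
  have e1 : ∑' p, D1 p = ∑' q, Ffun ψ q := by
    rw [← (aux_g1_inj).tsum_eq hsupp1]
    exact tsum_congr hg1
  have e2 : ∑' p, D2 p = ∑' q, Ffun ψ q := by
    rw [← (aux_g2_inj).tsum_eq hsupp2]
    exact tsum_congr hg2
  have hsplit : ∀ p : ℕ × ℕ, D p = D1 p + D2 p := by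
    intro p
    simp only [hD1def, hD2def]
    by_cases h : p.1 ≤ p.2
    · rw [if_pos h, if_neg (not_lt.mpr h), add_zero]
    · rw [if_neg h, if_pos (not_le.mp h), zero_add]
  calc ∑' p, D p = ∑' p, (D1 p + D2 p) := tsum_congr hsplit
    _ = (∑' p, D1 p) + ∑' p, D2 p := Summable.tsum_add hD1 hD2
    _ = 2 * ∑' q, Ffun ψ q := by rw [e1, e2]; ring

lemma aux_K (h1 : Summable (fun n : ℕ => ((n : ℝ) + 1) * |ψ n|))
    (b : ℕ → ℝ) (hb : ∀ k : ℕ, b k = ∑' n : ℕ, ψ n * ψ (n + k)) :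
    HasSum (fun k : ℕ => (k : ℝ) * b k) (∑' q : ℕ × ℕ, Ffun ψ q) := by
  refine ((aux_hF ψ h1).1.hasSum).prod_fiberwise (fun k => ?_)
  have := ((aux_hker ψ h1 k).hasSum.mul_left (k : ℝ))
  rw [hb k]
  exact this

end Aux3

section Aux4
variable (ψ : ℕ → ℝ)

noncomputable def Upsi (n a : ℕ) : ℝ := if n ≤ a then ψ a else 0
noncomputable def Uabs (n a : ℕ) : ℝ := if n ≤ a then |ψ a| else 0
noncomputable def Sfun : ℕ × (ℕ × ℕ) → ℝ := fun x => Upsi ψ x.1 x.2.1 * Upsi ψ x.1 x.2.2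

lemma aux_Uabs_eq (n a : ℕ) : |Upsi ψ n a| = Uabs ψ n a := by
  simp only [Upsi, Uabs]; split <;> simp

lemma aux_hUpsi (h1 : Summable (fun n : ℕ => ((n : ℝ) + 1) * |ψ n|)) (n : ℕ) :
    Summable (Upsi ψ n) := by
  refine Summable.of_norm_bounded (aux_habs ψ h1) (fun a => ?_)
  rw [Real.norm_eq_abs, aux_Uabs_eq]
  simp only [Uabs]; split <;> simp [abs_nonneg]

lemma aux_hUabs (h1 : Summable (fun n : ℕ => ((n : ℝ) + 1) * |ψ n|)) (n : ℕ) :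
    Summable (Uabs ψ n) := by
  refine Summable.of_norm_bounded (aux_habs ψ h1) (fun a => ?_)
  rw [Real.norm_eq_abs]
  simp only [Uabs]; split <;> simp [abs_nonneg, abs_abs, le_abs_self]

lemma aux_Uabs_nonneg (n a : ℕ) : 0 ≤ Uabs ψ n a := by
  simp only [Uabs]; split <;> simp [abs_nonneg]

lemma aux_tail (h1 : Summable (fun n : ℕ => ((n : ℝ) + 1) * |ψ n|)) (n : ℕ) :
    ∑ k ∈ Finset.range n, ψ k + (∑' a, Upsi ψ n a) = ∑' m, ψ m := by
  have hψ : Summable ψ := (aux_habs ψ h1).of_abs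
  have h : ∑' a, Upsi ψ n a = ∑' i, ψ (i + n) := by
    rw [← (add_left_injective n).tsum_eq (f := Upsi ψ n) ?_]
    · exact tsum_congr (fun i => by simp only [Upsi]; rw [if_pos (Nat.le_add_left n i)])
    · intro a ha
      have hle : n ≤ a := by
        by_contra hcon
        exact ha (by simp only [Upsi]; rw [if_neg hcon])
      refine ⟨a - n, ?_⟩
      show a - n + n = a
      omega
  rw [h, Summable.sum_add_tsum_nat_add n hψ]

lemma aux_TailA_summable (h1 : Summable (fun n : ℕ => ((n : ℝ) + 1) * |ψ n|)) :
    Summable (fun n : ℕ => ∑' a, Uabs ψ n a) := by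
  set V : ℕ × ℕ → ℝ := fun x => Uabs ψ x.2 x.1 with hVdef
  have hVfib : ∀ a : ℕ, Summable (fun n => V (a, n)) := by
    intro a
    refine summable_of_ne_finset_zero (s := Finset.range (a + 1)) (fun n hn => ?_)
    simp only [hVdef, Uabs]
    rw [if_neg (by simp at hn; omega)]
  have hVsum : ∀ a : ℕ, ∑' n, V (a, n) = ((a : ℝ) + 1) * |ψ a| := by
    intro a
    calc ∑' n, V (a, n)
        = ∑ n ∈ Finset.range (a + 1), V (a, n) :=
          tsum_eq_sum (fun n hn => by
            simp only [hVdef, Uabs]; rw [if_neg (by simp at hn; omega)])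
      _ = ∑ _n ∈ Finset.range (a + 1), |ψ a| :=
          Finset.sum_congr rfl (fun n hn => by
            simp only [hVdef, Uabs]; rw [if_pos (by simp at hn; omega)])
      _ = ((a : ℝ) + 1) * |ψ a| := by
          rw [Finset.sum_const, Finset.card_range, nsmul_eq_mul]; push_cast; ring
  have hV : Summable V := by
    refine (summable_prod_of_nonneg (fun x => aux_Uabs_nonneg ψ x.2 x.1)).mpr ⟨hVfib, ?_⟩
    exact h1.congr (fun a => (hVsum a).symm)
  have hU : Summable (fun x : ℕ × ℕ => Uabs ψ x.1 x.2) :=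
    (hV.comp_injective Prod.swap_injective)
  exact hU.hasSum.prod_fiberwise (fun n => (aux_hUabs ψ h1 n).hasSum) |>.summable

lemma aux_TailA_le (h1 : Summable (fun n : ℕ => ((n : ℝ) + 1) * |ψ n|)) (n : ℕ) :
    ∑' a, Uabs ψ n a ≤ ∑' a, |ψ a| := by
  refine Summable.tsum_le_tsum (fun a => ?_) (aux_hUabs ψ h1 n) (aux_habs ψ h1)
  simp only [Uabs]; split <;> simp [abs_nonneg]

lemma aux_TailA_sq_summable (h1 : Summable (fun n : ℕ => ((n : ℝ) + 1) * |ψ n|)) :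
    Summable (fun n : ℕ => (∑' a, Uabs ψ n a) * (∑' a, Uabs ψ n a)) := by
  refine Summable.of_nonneg_of_le (fun n => ?_) (fun n => ?_)
    ((aux_TailA_summable ψ h1).mul_left (∑' a, |ψ a|))
  · exact mul_nonneg (tsum_nonneg (aux_Uabs_nonneg ψ n)) (tsum_nonneg (aux_Uabs_nonneg ψ n))
  · exact mul_le_mul_of_nonneg_right (aux_TailA_le ψ h1 n) (tsum_nonneg (aux_Uabs_nonneg ψ n))

lemma aux_hSabs (h1 : Summable (fun n : ℕ => ((n : ℝ) + 1) * |ψ n|)) :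
    Summable (fun x : ℕ × (ℕ × ℕ) => |Sfun ψ x|) := by
  have habsS : ∀ x : ℕ × (ℕ × ℕ), |Sfun ψ x| = Uabs ψ x.1 x.2.1 * Uabs ψ x.1 x.2.2 := by
    intro x; simp only [Sfun]; rw [abs_mul, aux_Uabs_eq, aux_Uabs_eq]
  refine (summable_prod_of_nonneg (fun x => abs_nonneg _)).mpr ⟨fun n => ?_, ?_⟩
  · refine Summable.congr ?_ (fun p => (habsS (n, p)).symm)
    exact ((aux_hUabs ψ h1 n).mul_of_nonneg (aux_hUabs ψ h1 n)
      (fun a => aux_Uabs_nonneg ψ n a) (fun a => aux_Uabs_nonneg ψ n a))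
  · refine Summable.congr (aux_TailA_sq_summable ψ h1) (fun n => ?_)
    have hprod : Summable (fun p : ℕ × ℕ => Uabs ψ n p.1 * Uabs ψ n p.2) :=
      ((aux_hUabs ψ h1 n).mul_of_nonneg (aux_hUabs ψ h1 n)
        (fun a => aux_Uabs_nonneg ψ n a) (fun a => aux_Uabs_nonneg ψ n a))
    rw [Summable.tsum_mul_tsum (aux_hUabs ψ h1 n) (aux_hUabs ψ h1 n) hprod]
    exact (tsum_congr (fun p => (habsS (n, p)))).symm

lemma aux_hS (h1 : Summable (fun n : ℕ => ((n : ℝ) + 1) * |ψ n|)) :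
    Summable (Sfun ψ) := (aux_hSabs ψ h1).of_abs

lemma aux_hSn (h1 : Summable (fun n : ℕ => ((n : ℝ) + 1) * |ψ n|)) (n : ℕ) :
    Summable (fun p : ℕ × ℕ => Sfun ψ (n, p)) :=
  (aux_hS ψ h1).comp_injective (fun p q h => by
    simpa using congrArg Prod.snd h : Function.Injective (fun p : ℕ × ℕ => ((n, p) : ℕ × (ℕ × ℕ))))

lemma aux_E1 (h1 : Summable (fun n : ℕ => ((n : ℝ) + 1) * |ψ n|)) :
    HasSum (fun n : ℕ => (∑' a, Upsi ψ n a) * (∑' a, Upsi ψ n a)) (∑' x, Sfun ψ x) := by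
  refine (aux_hS ψ h1).hasSum.prod_fiberwise (fun n => ?_)
  have h := (aux_hSn ψ h1 n).hasSum
  have : ∑' p : ℕ × ℕ, Sfun ψ (n, p) = (∑' a, Upsi ψ n a) * (∑' a, Upsi ψ n a) :=
    (Summable.tsum_mul_tsum (aux_hUpsi ψ h1 n) (aux_hUpsi ψ h1 n) (aux_hSn ψ h1 n)).symm
  rwa [this] at h

lemma aux_E2 (h1 : Summable (fun n : ℕ => ((n : ℝ) + 1) * |ψ n|)) :
    ∑' x, Sfun ψ x = ∑' p : ℕ × ℕ, ((min p.1 p.2 : ℕ) + 1 : ℝ) * (ψ p.1 * ψ p.2) := by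
  have hS := aux_hS ψ h1
  have hswap : ∑' x, Sfun ψ x = ∑' y : (ℕ × ℕ) × ℕ, Sfun ψ (y.2, y.1) :=
    ((Equiv.prodComm (ℕ × ℕ) ℕ).tsum_eq (Sfun ψ)).symm
  have hS2 : Summable (fun y : (ℕ × ℕ) × ℕ => Sfun ψ (y.2, y.1)) :=
    hS.comp_injective (Equiv.prodComm (ℕ × ℕ) ℕ).injective
  have hfib : ∀ p : ℕ × ℕ, Summable (fun n : ℕ => Sfun ψ (n, p)) := by
    intro p
    refine summable_of_ne_finset_zero (s := Finset.range (min p.1 p.2 + 1)) (fun n hn => ?_)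
    simp only [Sfun, Upsi]
    simp only [Finset.mem_range] at hn
    rcases (by omega : ¬ n ≤ p.1 ∨ ¬ n ≤ p.2) with h | h
    · rw [if_neg h]; ring
    · rw [if_neg h]; ring
  rw [hswap, Summable.tsum_prod' hS2 (fun p => hfib p)]
  refine tsum_congr (fun p => ?_)
  calc ∑' n, Sfun ψ (n, p)
      = ∑ n ∈ Finset.range (min p.1 p.2 + 1), Sfun ψ (n, p) := by
        refine tsum_eq_sum (fun n hn => ?_)
        simp only [Sfun, Upsi]
        simp only [Finset.mem_range] at hn
        rcases (by omega : ¬ n ≤ p.1 ∨ ¬ n ≤ p.2) with h | h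
        · rw [if_neg h]; ring
        · rw [if_neg h]; ring
    _ = ∑ _n ∈ Finset.range (min p.1 p.2 + 1), (ψ p.1 * ψ p.2) := by
        refine Finset.sum_congr rfl (fun n hn => ?_)
        simp only [Sfun, Upsi]
        simp only [Finset.mem_range] at hn
        rw [if_pos (by omega), if_pos (by omega)]
    _ = ((min p.1 p.2 : ℕ) + 1 : ℝ) * (ψ p.1 * ψ p.2) := by
        rw [Finset.sum_const, Finset.card_range, nsmul_eq_mul]; push_cast; ring

end Aux4

/-- Inventory-breakdown identity for an invertible (outer) policy: if
`Σ (n+1)|ψ_n| < ∞` and `Σ ψ_n = 1`, then with autocovariances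
`b_k = Σ_n ψ_n ψ_{n+k}` (absolutely convergent), the inventory variance satisfies
`Σ_{n≥0} (Σ_{k<n} ψ_k − 1)² = 1 + Σ_{n≥1} n·ψ_n − Σ_{k≥1} k·b_k`,
i.e. `σ_I²(ψ) = 1 + GD(ψ) − (1/2)∂_r f_ψ(1)`. -/
theorem stmt_5 (ψ : ℕ → ℝ)
    (h1 : Summable (fun n : ℕ => ((n : ℝ) + 1) * |ψ n|))
    (h2 : ∑' n : ℕ, ψ n = 1)
    (b : ℕ → ℝ) (hb : ∀ k : ℕ, b k = ∑' n : ℕ, ψ n * ψ (n + k)) :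
    (∀ k : ℕ, Summable (fun n : ℕ => ψ n * ψ (n + k))) ∧
    Summable (fun n : ℕ => (∑ k ∈ Finset.range n, ψ k - 1) ^ 2) ∧
    Summable (fun n : ℕ => (n : ℝ) * ψ n) ∧
    Summable (fun k : ℕ => (k : ℝ) * b k) ∧
    ∑' n : ℕ, (∑ k ∈ Finset.range n, ψ k - 1) ^ 2 =
      1 + (∑' n : ℕ, (n : ℝ) * ψ n) - ∑' k : ℕ, (k : ℝ) * b k := by
  have habs := aux_habs ψ h1
  have hψ : Summable ψ := habs.of_abs
  have hker := aux_hker ψ h1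
  have hnψ := aux_hnψ ψ h1
  have hK := aux_K ψ h1 b hb
  have hKsum : Summable (fun k : ℕ => (k : ℝ) * b k) := hK.summable
  have hKval : ∑' k : ℕ, (k : ℝ) * b k = ∑' q : ℕ × ℕ, Ffun ψ q := hK.tsum_eq
  -- LHS
  have hTail : ∀ n : ℕ, (∑ k ∈ Finset.range n, ψ k - 1) ^ 2 =
      (∑' a, Upsi ψ n a) * (∑' a, Upsi ψ n a) := by
    intro n
    have h := aux_tail ψ h1 n
    rw [h2] at h
    have h' : ∑ k ∈ Finset.range n, ψ k - 1 = -(∑' a, Upsi ψ n a) := by linarith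
    rw [h']; ring
  have hE1 := aux_E1 ψ h1
  have hLsummable : Summable (fun n : ℕ => (∑ k ∈ Finset.range n, ψ k - 1) ^ 2) :=
    hE1.summable.congr (fun n => (hTail n).symm)
  have hLval : ∑' n : ℕ, (∑ k ∈ Finset.range n, ψ k - 1) ^ 2 = ∑' x, Sfun ψ x := by
    rw [tsum_congr hTail]; exact hE1.tsum_eq
  have hE2 := aux_E2 ψ h1
  -- A1, A2
  have hψ1 : Summable (fun n : ℕ => ((n : ℝ) + 1) * ψ n) := by
    refine Summable.of_norm_bounded h1 (fun n => ?_)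
    rw [Real.norm_eq_abs, abs_mul, abs_of_nonneg (by positivity : (0:ℝ) ≤ (n:ℝ) + 1)]
  have hGD1 : ∑' n : ℕ, ((n : ℝ) + 1) * ψ n = 1 + ∑' n : ℕ, (n : ℝ) * ψ n := by
    rw [tsum_congr (fun n : ℕ => (by ring : ((n:ℝ)+1) * ψ n = (n:ℝ) * ψ n + ψ n)),
      Summable.tsum_add hnψ hψ, h2]
    ring
  have hA1val : ∑' p : ℕ × ℕ, ((p.1 : ℝ) + 1) * (ψ p.1 * ψ p.2) =
      1 + ∑' n : ℕ, (n : ℝ) * ψ n := by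
    have hprod : Summable (fun p : ℕ × ℕ => (((p.1:ℝ)+1) * ψ p.1) * ψ p.2) :=
      (aux_hA1 ψ h1).congr (fun p => by ring)
    have h := Summable.tsum_mul_tsum hψ1 hψ hprod
    rw [h2, mul_one, hGD1] at h
    rw [tsum_congr (fun p : ℕ × ℕ =>
      (by ring : ((p.1:ℝ)+1) * (ψ p.1 * ψ p.2) = (((p.1:ℝ)+1) * ψ p.1) * ψ p.2)), ← h]
  have hA2val : ∑' p : ℕ × ℕ, ((p.2 : ℝ) + 1) * (ψ p.1 * ψ p.2) =
      1 + ∑' n : ℕ, (n : ℝ) * ψ n := by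
    have hprod : Summable (fun p : ℕ × ℕ => ψ p.1 * (((p.2:ℝ)+1) * ψ p.2)) :=
      (aux_hA2 ψ h1).congr (fun p => by ring)
    have h := Summable.tsum_mul_tsum hψ hψ1 hprod
    rw [h2, one_mul, hGD1] at h
    rw [tsum_congr (fun p : ℕ × ℕ =>
      (by ring : ((p.2:ℝ)+1) * (ψ p.1 * ψ p.2) = ψ p.1 * (((p.2:ℝ)+1) * ψ p.2))), ← h]
  obtain ⟨hFsum, hDval⟩ := aux_hF ψ h1
  -- 2 * Gsum
  have h2G : 2 * (∑' p : ℕ × ℕ, ((min p.1 p.2 : ℕ) + 1 : ℝ) * (ψ p.1 * ψ p.2)) =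
      (∑' p : ℕ × ℕ, ((p.1 : ℝ) + 1) * (ψ p.1 * ψ p.2))
      + (∑' p : ℕ × ℕ, ((p.2 : ℝ) + 1) * (ψ p.1 * ψ p.2))
      - ∑' p : ℕ × ℕ, |(p.1 : ℝ) - (p.2 : ℝ)| * (ψ p.1 * ψ p.2) := by
    rw [← tsum_mul_left, tsum_congr (aux_pointwise ψ),
      Summable.tsum_sub ((aux_hA1 ψ h1).add (aux_hA2 ψ h1)) (aux_hD ψ h1),
      Summable.tsum_add (aux_hA1 ψ h1) (aux_hA2 ψ h1)]
  refine ⟨hker, hLsummable, hnψ, hKsum, ?_⟩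
  rw [hLval, hE2, hKval]
  rw [hA1val, hA2val, hDval] at h2G
  linarith
end

section
/- Let Q be a polynomial with real coefficients such that Q(1) = 1 and Q(z) ≠ 0 for all |z| < 1. For a ∈ (−1, 1) let B_a(z) = (z − a)/(1 − a·z), the Blaschke factor normalized so that B_a(1) = 1. Then σ_I²(Q·B_a) = σ_I²(Q) + (1+a)/(1−a), where for a circle function F, σ_I²(F) = (1/2π)∫_{−π}^{π} |(e^{−iλ}F(e^{−iλ}) − 1)/(1 − e^{−iλ})|² dλ. That is, inserting the Blaschke (all-pass) factor B_a increases the retailer's inventory variance by exactly its group delay GD(B_a) = B_a′(1) = (1 − a²)/(1 − a)² = (1+a)/(1−a). -/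
open MeasureTheory intervalIntegral

/-- Inventory variance of a function on the unit circle:
`σ_I²(F) = (1/2π)∫_{−π}^{π} |(e^{−iλ}F(e^{−iλ}) − 1)/(1 − e^{−iλ})|² dλ`. -/
noncomputable def sigmaI2c (F : ℝ → ℂ) : ℝ :=
  (1 / (2 * Real.pi)) * ∫ l in (-Real.pi)..Real.pi,
    ‖(Complex.exp (-Complex.I * l) * F l - 1) / (1 - Complex.exp (-Complex.I * l))‖ ^ 2

open Complex Polynomial ComplexConjugate

lemma expI_norm (l : ℝ) : ‖Complex.exp (-Complex.I * l)‖ = 1 := by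
  rw [Complex.norm_exp]
  simp

lemma E0 : (∫ l in (-Real.pi)..Real.pi, (1 : ℂ)) = 2 * Real.pi := by
  simp [two_mul]

lemma E (n : ℕ) (hn : n ≠ 0) :
    (∫ l in (-Real.pi)..Real.pi, Complex.exp (-Complex.I * l) ^ n) = 0 := by
  have h : ∀ l : ℝ, Complex.exp (-Complex.I * l) ^ n
      = Complex.exp ((-Complex.I * n) * l) := by
    intro l
    rw [← Complex.exp_nat_mul]; ring_nf
  simp_rw [h]
  rw [integral_exp_mul_complex (by simp [Complex.ext_iff, hn])]
  have h1 : Complex.exp (-Complex.I * n * (Real.pi : ℝ)) = (-1 : ℂ) ^ n := by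
    rw [show (-Complex.I * n * (Real.pi : ℝ)) = (n : ℂ) * (-(Real.pi * Complex.I)) by ring,
      Complex.exp_nat_mul, Complex.exp_neg, Complex.exp_pi_mul_I, inv_neg, inv_one]
  have h2 : Complex.exp (-Complex.I * n * ((-Real.pi : ℝ) : ℂ)) = (-1 : ℂ) ^ n := by
    push_cast
    rw [show (-Complex.I * n * -(Real.pi : ℂ)) = (n : ℂ) * (Real.pi * Complex.I) by ring,
      Complex.exp_nat_mul, Complex.exp_pi_mul_I]
  rw [h1, h2]
  simp

lemma contz : Continuous fun l : ℝ => Complex.exp (-Complex.I * l) :=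
  Complex.continuous_exp.comp (by fun_prop)

lemma hden {a : ℝ} (ha : |a| < 1) (l : ℝ) :
    (1 : ℂ) - a * Complex.exp (-Complex.I * l) ≠ 0 := by
  intro h
  have h2 : (a : ℂ) * Complex.exp (-Complex.I * l) = 1 := by linear_combination -h
  have := congrArg norm h2
  rw [norm_mul, expI_norm, norm_one, mul_one, Complex.norm_real, Real.norm_eq_abs] at this
  linarith

lemma normden {a : ℝ} (ha : |a| < 1) (l : ℝ) :
    1 - |a| ≤ ‖(1 : ℂ) - a * Complex.exp (-Complex.I * l)‖ := by
  have h1 : ‖(a : ℂ) * Complex.exp (-Complex.I * l)‖ = |a| := by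
    rw [norm_mul, expI_norm, mul_one, Complex.norm_real, Real.norm_eq_abs]
  calc 1 - |a| = ‖(1:ℂ)‖ - ‖(a : ℂ) * Complex.exp (-Complex.I * l)‖ := by rw [h1, norm_one]
  _ ≤ _ := norm_sub_norm_le _ _

lemma contK {a : ℝ} (ha : |a| < 1) (n : ℕ) :
    Continuous fun l : ℝ => Complex.exp (-Complex.I * l) ^ n /
      (1 - a * Complex.exp (-Complex.I * l)) :=
  (contz.pow n).div ((continuous_const.sub (continuous_const.mul contz))) (fun l => hden ha l)

lemma K0 {a : ℝ} (ha : |a| < 1) (n : ℕ) (hn : n ≠ 0) :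
    (∫ l in (-Real.pi)..Real.pi, Complex.exp (-Complex.I * l) ^ n /
      (1 - a * Complex.exp (-Complex.I * l))) = 0 := by
  set Kf : ℕ → ℂ := fun m => ∫ l in (-Real.pi)..Real.pi, Complex.exp (-Complex.I * l) ^ m /
      (1 - a * Complex.exp (-Complex.I * l)) with hKf
  have hrec : ∀ m : ℕ, m ≠ 0 → Kf m = a * Kf (m + 1) := by
    intro m hm
    have hptw : ∀ l : ℝ, Complex.exp (-Complex.I * l) ^ m /
        (1 - a * Complex.exp (-Complex.I * l)) =
        Complex.exp (-Complex.I * l) ^ m + a * (Complex.exp (-Complex.I * l) ^ (m+1) /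
        (1 - a * Complex.exp (-Complex.I * l))) := by
      intro l
      set w := Complex.exp (-Complex.I * l) with hw
      have hd : (1:ℂ) - a*w ≠ 0 := hden ha l
      have hd' : (1:ℂ) - w*a ≠ 0 := by rwa [mul_comm] at hd
      rw [div_eq_iff hd]
      field_simp
      ring
    rw [hKf]
    simp only [hptw]
    rw [intervalIntegral.integral_add (f := fun l : ℝ => Complex.exp (-Complex.I * l) ^ m)
      (g := fun l : ℝ => (a:ℂ) * (Complex.exp (-Complex.I * l) ^ (m+1) /
        (1 - a * Complex.exp (-Complex.I * l)))) ((contz.pow m).intervalIntegrable _ _)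
      ((continuous_const.mul (contK ha (m+1))).intervalIntegrable _ _),
      E m hm, intervalIntegral.integral_const_mul, zero_add]
  have hiter : ∀ k : ℕ, Kf n = (a : ℂ) ^ k * Kf (n + k) := by
    intro k
    induction k with
    | zero => simp
    | succ k ih =>
      rw [ih, hrec (n + k) (by omega)]
      ring_nf
  have hbound : ∀ m : ℕ, ‖Kf m‖ ≤ (1 - |a|)⁻¹ * |Real.pi - (-Real.pi)| := by
    intro m
    apply intervalIntegral.norm_integral_le_of_norm_le_const
    intro l _
    rw [norm_div, norm_pow, expI_norm, one_pow]
    rw [inv_eq_one_div]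
    apply div_le_div_of_nonneg_left one_pos.le (by linarith) (normden ha l)
  have hlim : Filter.Tendsto (fun k : ℕ => |a| ^ k * ((1 - |a|)⁻¹ * |Real.pi - (-Real.pi)|))
      Filter.atTop (nhds 0) := by
    simpa using (tendsto_pow_atTop_nhds_zero_of_lt_one (abs_nonneg a) ha).mul_const
      ((1 - |a|)⁻¹ * |Real.pi - (-Real.pi)|)
  have hle : ‖Kf n‖ ≤ 0 := by
    apply ge_of_tendsto' hlim
    intro k
    calc ‖Kf n‖ = |a| ^ k * ‖Kf (n + k)‖ := by
          rw [hiter k, norm_mul, norm_pow, Complex.norm_real, Real.norm_eq_abs]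
    _ ≤ |a| ^ k * ((1 - |a|)⁻¹ * |Real.pi - (-Real.pi)|) := by
          exact mul_le_mul_of_nonneg_left (hbound _) (pow_nonneg (abs_nonneg a) k)
  exact norm_le_zero_iff.mp hle

lemma contAeval (p : Polynomial ℝ) :
    Continuous fun l : ℝ => (Polynomial.aeval (Complex.exp (-Complex.I * l)) p : ℂ) := by
  exact (Polynomial.continuous_aeval p).comp contz

lemma PI (p : Polynomial ℝ) :
    (∫ l in (-Real.pi)..Real.pi, (Polynomial.aeval (Complex.exp (-Complex.I * l)) p : ℂ)) =
      2 * Real.pi * (p.coeff 0) := by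
  have h : ∀ l : ℝ, (Polynomial.aeval (Complex.exp (-Complex.I * l)) p : ℂ) =
      ∑ i ∈ Finset.range (p.natDegree + 1),
        (p.coeff i : ℂ) * Complex.exp (-Complex.I * l) ^ i := by
    intro l
    rw [Polynomial.aeval_eq_sum_range]
    exact Finset.sum_congr rfl fun i _ => by rw [Algebra.smul_def]; norm_num
  simp_rw [h]
  rw [intervalIntegral.integral_finset_sum]
  · rw [Finset.sum_eq_single 0]
    · rw [intervalIntegral.integral_const_mul]
      simp only [pow_zero, E0]
      ring
    · intro i _ hi
      rw [intervalIntegral.integral_const_mul, E i hi, mul_zero]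
    · intro h0
      simp at h0
  · intro i _
    exact (continuous_const.mul (contz.pow i)).intervalIntegrable _ _

lemma PIdiv {a : ℝ} (ha : |a| < 1) (p : Polynomial ℝ) :
    (∫ l in (-Real.pi)..Real.pi, Complex.exp (-Complex.I * l) *
      (Polynomial.aeval (Complex.exp (-Complex.I * l)) p : ℂ) /
      (1 - a * Complex.exp (-Complex.I * l))) = 0 := by
  have h : ∀ l : ℝ, Complex.exp (-Complex.I * l) *
      (Polynomial.aeval (Complex.exp (-Complex.I * l)) p : ℂ) /
      (1 - a * Complex.exp (-Complex.I * l)) =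
      ∑ i ∈ Finset.range (p.natDegree + 1),
        (p.coeff i : ℂ) * (Complex.exp (-Complex.I * l) ^ (i + 1) /
          (1 - a * Complex.exp (-Complex.I * l))) := by
    intro l
    rw [Polynomial.aeval_eq_sum_range, Finset.mul_sum, Finset.sum_div]
    exact Finset.sum_congr rfl fun i _ => by
      simp only [Algebra.smul_def, Complex.coe_algebraMap, pow_succ]
      ring
  simp_rw [h]
  rw [intervalIntegral.integral_finset_sum]
  · apply Finset.sum_eq_zero
    intro i _
    rw [intervalIntegral.integral_const_mul, K0 ha (i + 1) (by omega), mul_zero]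
  · intro i _
    exact (continuous_const.mul (contK ha (i + 1))).intervalIntegrable _ _

lemma algG (a z q r : ℂ) (hz : z ≠ 0) (h1 : 1 - z ≠ 0) (h2 : 1 - a*z ≠ 0)
    (hq : z*q - 1 = (z-1)*r) :
    (z*q*((z-a)/(1-a*z)) - 1)/(1-z) = -((z-a)*r + (1+a))/(1-a*z) := by
  rw [div_eq_div_iff h1 h2]
  rw [sub_mul, mul_assoc (z*q), div_mul_cancel₀ _ h2]
  linear_combination (z - a)*hq

lemma algH (z q r : ℂ) (h1 : 1 - z ≠ 0) (hq : z*q - 1 = (z-1)*r) :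
    (z*q - 1)/(1-z) = -r := by
  rw [div_eq_iff h1]
  linear_combination hq

set_option maxHeartbeats 1000000 in
lemma alg (a z c r r' : ℂ) (hz : z ≠ 0) (hza : z - a ≠ 0)
    (h2 : 1 - a*z ≠ 0) (h3 : 1 - a*c ≠ 0) (ha1 : 1 - a ≠ 0)
    (hc : z * c = 1) :
    (-((z-a)*r + (1+a))/(1-a*z)) * (-((c-a)*r' + (1+a))/(1-a*c))
      = r*r' + ((1+a)/(1-a)) * ((z*r+1) + (c*r'+1) - 1
          + a*(z*((z-1)*r+1)/(1-a*z) + c*((c-1)*r'+1)/(1-a*c))) := by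
  have h2' : 1 - z*a ≠ 0 := by rwa [mul_comm] at h2
  have h3' : 1 - c*a ≠ 0 := by rwa [mul_comm] at h3
  field_simp
  linear_combination ((1-a)*(1-a^2)*r*r' + (1+a)*((1-a)*a*(r+r') + a^2)) * hc

/-- For a real polynomial `Q` with `Q(1) = 1` and no zeros in the open unit disk, and
`a ∈ (−1, 1)`, inserting the Blaschke factor `B_a(z) = (z − a)/(1 − a·z)` increases the
inventory variance by exactly its group delay `(1+a)/(1−a)`:
`σ_I²(Q·B_a) = σ_I²(Q) + (1+a)/(1−a)`. -/
theorem stmt_7 (Q : Polynomial ℝ)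
    (hQ1 : Polynomial.aeval (1 : ℂ) Q = 1)
    (hQ0 : ∀ z : ℂ, ‖z‖ < 1 → Polynomial.aeval z Q ≠ 0)
    (a : ℝ) (ha : -1 < a) (ha' : a < 1) :
    sigmaI2c (fun l => Polynomial.aeval (Complex.exp (-Complex.I * l)) Q *
        ((Complex.exp (-Complex.I * l) - (a : ℂ)) /
          (1 - (a : ℂ) * Complex.exp (-Complex.I * l)))) =
      sigmaI2c (fun l => Polynomial.aeval (Complex.exp (-Complex.I * l)) Q) +
        (1 + a) / (1 - a) := by
  have habs : |a| < 1 := abs_lt.mpr ⟨ha, ha'⟩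
  have hπ := Real.pi_pos
  have hQe1 : Q.eval 1 = 1 := by
    have h := hQ1
    rw [show (1:ℂ) = (RCLike.ofReal (1:ℝ) : ℂ) by norm_num, Polynomial.aeval_ofReal] at h
    exact_mod_cast h
  set Rr : Polynomial ℝ := (X * Q - C 1) /ₘ (X - C 1) with hRr
  have hfac : X * Q - C 1 = (X - C 1) * Rr := by
    have hm := Polynomial.monic_X_sub_C (1:ℝ)
    have h := Polynomial.modByMonic_add_div (X * Q - C 1) (X - C 1)
    rw [Polynomial.modByMonic_X_sub_C_eq_C_eval] at h
    simp [hQe1] at h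
    exact h.symm
  have hfacC : ∀ w : ℂ, w * (Polynomial.aeval w Q) - 1 = (w - 1) * (Polynomial.aeval w Rr) := by
    intro w
    have h := congrArg (Polynomial.aeval w) hfac
    simpa using h
  simp only [sigmaI2c]
  set e : ℝ → ℂ := fun l => Complex.exp (-Complex.I * l) with he
  set r : ℝ → ℂ := fun l => Polynomial.aeval (e l) Rr with hrdef
  set Pw : Polynomial ℝ := (X - C 1) * Rr + C 1 with hPw
  set Bf : ℝ → ℝ := fun l => ‖r l‖^2 with hBf
  set Df : ℝ → ℝ := fun l => (2*(1+a)/(1-a)) *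
    ((e l * r l + 1).re - 1/2 + a * ((e l * Polynomial.aeval (e l) Pw / (1 - a * e l)).re))
    with hDf
  have hz0 : ∀ l, e l ≠ 0 := fun l => Complex.exp_ne_zero _
  have h2 : ∀ l, (1:ℂ) - a * e l ≠ 0 := fun l => hden habs l
  have hkeyH : ∀ l : ℝ, e l ≠ 1 →
      ‖(e l * Polynomial.aeval (e l) Q - 1)/(1 - e l)‖^2 = Bf l := by
    intro l hl
    have h1 : (1:ℂ) - e l ≠ 0 := sub_ne_zero.mpr (Ne.symm hl)
    rw [algH (e l) _ (r l) h1 (hfacC (e l))]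
    simp [hBf]
  have hkey : ∀ l : ℝ, e l ≠ 1 →
      ‖(e l * (Polynomial.aeval (e l) Q * ((e l - a)/(1 - a * e l))) - 1)/(1 - e l)‖^2
        = Bf l + Df l := by
    intro l hl
    have h1 : (1:ℂ) - e l ≠ 0 := sub_ne_zero.mpr (Ne.symm hl)
    have h2l := h2 l
    have habsE : ‖e l‖ = 1 := by
      rw [he]
      exact expI_norm l
    have hza : e l - a ≠ 0 := by
      intro h
      rw [sub_eq_zero] at h
      have h5 : ‖(a:ℂ)‖ = 1 := by rw [← h]; exact habsE
      rw [Complex.norm_real, Real.norm_eq_abs] at h5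
      linarith [habs]
    have hc : e l * conj (e l) = 1 := by
      rw [Complex.mul_conj, Complex.normSq_eq_norm_sq, habsE]
      norm_num
    have h3 : (1:ℂ) - a * conj (e l) ≠ 0 := by
      intro h
      apply h2 l
      have h6 := congrArg (starRingEnd ℂ) h
      simpa [Complex.conj_ofReal] using h6
    have ha1 : (1:ℂ) - (a:ℂ) ≠ 0 := by
      intro h
      rw [sub_eq_zero] at h
      have : (1:ℝ) = a := by exact_mod_cast h
      linarith
    have e1 : (e l * (Polynomial.aeval (e l) Q * ((e l - a)/(1 - a * e l))) - 1)/(1 - e l)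
        = -((e l - a) * r l + (1+a))/(1 - a * e l) := by
      have h7 := algG a (e l) (Polynomial.aeval (e l) Q) (r l) (hz0 l) h1 h2l (hfacC (e l))
      rw [← h7]
      ring_nf
    rw [e1]
    have hnormsq : ∀ w : ℂ, ‖w‖^2 = (w * conj w).re := by
      intro w
      rw [Complex.mul_conj]
      rw [Complex.ofReal_re, Complex.normSq_eq_norm_sq]
    rw [hnormsq]
    have hconj : conj (-((e l - a) * r l + (1+(a:ℂ)))/(1 - a * e l))
        = -((conj (e l) - a) * conj (r l) + (1+(a:ℂ)))/(1 - a * conj (e l)) := by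
      simp [map_div₀, Complex.conj_ofReal]
    rw [hconj, alg a (e l) (conj (e l)) (r l) (conj (r l)) (hz0 l) hza h2l h3 ha1 hc]
    have k1 : conj (e l) * conj (r l) + 1 = conj (e l * r l + 1) := by simp
    have k2 : conj (e l) * ((conj (e l) - 1) * conj (r l) + 1)/(1 - (a:ℂ) * conj (e l))
        = conj (e l * ((e l - 1) * r l + 1)/(1 - (a:ℂ) * e l)) := by
      simp [map_div₀, Complex.conj_ofReal]
    rw [k1, k2, Complex.mul_conj, Complex.add_conj, Complex.add_conj]
    have hPwe : (Polynomial.aeval (e l) Pw : ℂ) = (e l - 1) * r l + 1 := by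
      rw [hPw]
      simp [hrdef]
    have hs : ((1:ℂ)+(a:ℂ))/(1-(a:ℂ)) = (((1+a)/(1-a) : ℝ) : ℂ) := by norm_cast
    rw [hs]
    simp only [hBf, hDf]
    rw [hPwe]
    set x := (e l * r l + 1).re with hx
    set y := (e l * ((e l - 1) * r l + 1) / (1 - (a:ℂ) * e l)).re with hy
    rw [Complex.normSq_eq_norm_sq]
    simp only [Complex.add_re, Complex.mul_re, Complex.sub_re, Complex.one_re,
      Complex.ofReal_re, Complex.ofReal_im, Complex.add_im, Complex.sub_im,
      Complex.mul_im, Complex.one_im, Complex.ofReal_mul]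
    ring
  -- a.e. statement
  have hZ : {l : ℝ | e l = 1}.Countable := by
    apply Set.Countable.mono _ (Set.countable_range (fun n : ℤ => -(2*Real.pi*n)))
    intro l hl
    rw [Set.mem_setOf_eq, he] at hl
    rw [Complex.exp_eq_one_iff] at hl
    obtain ⟨n, hn⟩ := hl
    have him := congrArg Complex.im hn
    simp at him
    refine ⟨n, ?_⟩
    push_cast
    linarith
  have hae : ∀ᵐ l : ℝ, e l ≠ 1 := by
    rw [MeasureTheory.ae_iff]
    have h0 := Set.Countable.measure_zero hZ MeasureTheory.volume
    simpa [not_not] using h0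
  -- continuity
  have hcontB : Continuous Bf := by
    rw [hBf]
    exact ((contAeval Rr).norm).pow 2
  have hcontw1 : Continuous fun l => e l * r l + 1 := by
    exact ((contz.mul (contAeval Rr)).add continuous_const)
  have hcontW : Continuous fun l => e l * (Polynomial.aeval (e l) Pw : ℂ) / (1 - (a:ℂ) * e l) :=
    (contz.mul (contAeval Pw)).div
      (continuous_const.sub (continuous_const.mul contz)) (fun l => h2 l)
  have hcontD : Continuous Df := by
    rw [hDf]
    apply continuous_const.mul
    apply Continuous.add
    · exact (Complex.continuous_re.comp hcontw1).sub continuous_const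
    · exact continuous_const.mul (Complex.continuous_re.comp hcontW)
  -- the two integral congruences
  have hIG : (∫ l in (-Real.pi)..Real.pi,
      ‖(e l * (Polynomial.aeval (e l) Q * ((e l - (a:ℂ))/(1 - (a:ℂ) * e l))) - 1)/(1 - e l)‖^2)
      = (∫ l in (-Real.pi)..Real.pi, Bf l) + ∫ l in (-Real.pi)..Real.pi, Df l := by
    rw [← intervalIntegral.integral_add (hcontB.intervalIntegrable _ _)
      (hcontD.intervalIntegrable _ _)]
    apply intervalIntegral.integral_congr_ae
    filter_upwards [hae] with l hl _
    exact hkey l hl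
  have hIH : (∫ l in (-Real.pi)..Real.pi,
      ‖(e l * Polynomial.aeval (e l) Q - 1)/(1 - e l)‖^2)
      = ∫ l in (-Real.pi)..Real.pi, Bf l := by
    apply intervalIntegral.integral_congr_ae
    filter_upwards [hae] with l hl _
    exact hkeyH l hl
  -- compute ∫ Df
  have hint1 : (∫ l in (-Real.pi)..Real.pi, (e l * r l + 1).re) = 2 * Real.pi := by
    have hfn : (fun l : ℝ => (e l * r l + 1).re)
        = fun l => Complex.reCLM (Polynomial.aeval (e l) (X * Rr + C 1)) := by
      funext l
      simp [hrdef]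
    rw [hfn, ContinuousLinearMap.intervalIntegral_comp_comm _
      ((contAeval (X * Rr + C 1)).intervalIntegrable _ _), PI]
    simp [Polynomial.mul_coeff_zero]
  have hint2 : (∫ l in (-Real.pi)..Real.pi,
      (e l * (Polynomial.aeval (e l) Pw : ℂ) / (1 - (a:ℂ) * e l)).re) = 0 := by
    have hfn : (fun l : ℝ => (e l * (Polynomial.aeval (e l) Pw : ℂ) / (1 - (a:ℂ) * e l)).re)
        = fun l => Complex.reCLM (e l * (Polynomial.aeval (e l) Pw : ℂ) / (1 - (a:ℂ) * e l)) := by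
      funext l
      rfl
    rw [hfn, ContinuousLinearMap.intervalIntegral_comp_comm _
      (hcontW.intervalIntegrable _ _), PIdiv habs Pw]
    simp
  have hintD : (∫ l in (-Real.pi)..Real.pi, Df l) = (2*(1+a)/(1-a)) * Real.pi := by
    rw [hDf]
    rw [intervalIntegral.integral_const_mul]
    have hsplit : (∫ l in (-Real.pi)..Real.pi,
        ((e l * r l + 1).re - 1/2 + a * ((e l * (Polynomial.aeval (e l) Pw : ℂ) / (1 - (a:ℂ) * e l)).re)))
        = (∫ l in (-Real.pi)..Real.pi, ((e l * r l + 1).re - 1/2))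
          + ∫ l in (-Real.pi)..Real.pi, a * ((e l * (Polynomial.aeval (e l) Pw : ℂ) / (1 - (a:ℂ) * e l)).re) := by
      apply intervalIntegral.integral_add
      · exact ((Complex.continuous_re.comp hcontw1).sub continuous_const).intervalIntegrable _ _
      · exact (continuous_const.mul (Complex.continuous_re.comp hcontW)).intervalIntegrable _ _
    have i1 : Continuous fun l : ℝ => (e l * r l + 1).re := Complex.continuous_re.comp hcontw1
    rw [hsplit, intervalIntegral.integral_sub (i1.intervalIntegrable _ _)
      (continuous_const.intervalIntegrable _ _),
      intervalIntegral.integral_const_mul, hint1, hint2, intervalIntegral.integral_const]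
    rw [smul_eq_mul]
    ring
  rw [hIG, hIH, hintD]
  field_simp
end
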